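/- For every k ≥ 2, L_circ(k) ≤ L(k−1) + 1, where L(m) denotes the minimal length of a (linear) m-superpattern and L_circ(k) denotes the minimal length of a circular k-superpattern. -/

import Mathlib

/-- `l` is the one-line notation of a permutation of `{1, …, n}`. -/
def IsPermList (n : ℕ) (l : List ℕ) : Prop := l.Perm ((List.range n).map (· + 1))

/-- The pattern `σ` occurs as an order-isomorphic subsequence of the word `w`:
there are indices `i₁ < ⋯ < i_k` with `w (i_p) < w (i_q)` exactly when `σ p < σ q`. -/
def OrderIsoContains (w σ : List ℕ) : Prop :=
  ∃ f : Fin σ.length → Fin w.length, StrictMono f ∧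
    ∀ p q : Fin σ.length, w.get (f p) < w.get (f q) ↔ σ.get p < σ.get q

/-- `w` contains every permutation of length `k` as an order-isomorphic subsequence. -/
def IsSuperpattern (k : ℕ) (w : List ℕ) : Prop :=
  ∀ σ : List ℕ, IsPermList k σ → OrderIsoContains w σ

/-- `w` circularly contains every permutation of length `k`: some rotation
`ρ_r σ = σ.rotate r` occurs as an order-isomorphic subsequence of `w`. -/
def IsCircSuperpattern (k : ℕ) (w : List ℕ) : Prop :=
  ∀ σ : List ℕ, IsPermList k σ → ∃ r < k, OrderIsoContains w (σ.rotate r)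

/-- `L(k)`: minimal length of a linear `k`-superpattern. -/
noncomputable def Llin (k : ℕ) : ℕ :=
  sInf {n | ∃ w : List ℕ, IsPermList n w ∧ IsSuperpattern k w}

/-- `L_circ(k)`: minimal length of a circular `k`-superpattern. -/
noncomputable def Lcirc (k : ℕ) : ℕ :=
  sInf {n | ∃ w : List ℕ, IsPermList n w ∧ IsCircSuperpattern k w}

lemma key_lt {m j1 s1 j2 s2 : ℕ} (h : j1 < j2) (hs1 : s1 ≤ m) (hs2 : 1 ≤ s2) :
    j1 * m + s1 < j2 * m + s2 := by
  have H := Nat.mul_le_mul_right m (Nat.succ_le_of_lt h)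
  rw [Nat.succ_mul] at H
  omega

lemma key_lt' {m j1 s1 j2 s2 : ℕ} (h : j1 < j2) (hs1 : s1 < m) :
    j1 * m + s1 < j2 * m + s2 := by
  have H := Nat.mul_le_mul_right m (Nat.succ_le_of_lt h)
  rw [Nat.succ_mul] at H
  omega

lemma grid_inj {m a b a' b' : ℕ} (ha : a < m) (hb : b < m) (ha' : a' < m) (hb' : b' < m)
    (h : a * m + (m - b) = a' * m + (m - b')) : a = a' ∧ b = b' := by
  rcases lt_trichotomy a a' with hl | he | hl
  · exact absurd (key_lt hl (by omega) (by omega) :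
      a * m + (m - b) < a' * m + (m - b')) (by omega)
  · exact ⟨he, by subst he; omega⟩
  · exact absurd (key_lt hl (by omega) (by omega) :
      a' * m + (m - b') < a * m + (m - b)) (by omega)

def gridVal (m t : ℕ) : ℕ := (t % m) * m + (m - t / m)

lemma exists_superpattern (m : ℕ) :
    ∃ n w, IsPermList n w ∧ IsSuperpattern m w := by
  classical
  refine ⟨m * m, (List.range (m * m)).map (gridVal m), ?_, ?_⟩
  · -- permutation list
    have hm' : ∀ t, t < m*m → t / m < m := by
      intro t ht
      have hm : 0 < m := by
        rcases Nat.eq_zero_or_pos m with h | h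
        · subst h; simp at ht
        · exact h
      exact (Nat.div_lt_iff_lt_mul hm).mpr (by omega)
    have hB : ((List.range (m*m)).map (· + 1)).Nodup :=
      List.Nodup.map (fun a b h => by omega) List.nodup_range
    have hA : ((List.range (m*m)).map (gridVal m)).Nodup := by
      refine List.Nodup.map_on ?_ List.nodup_range
      intro t1 h1 t2 h2 h
      simp only [List.mem_range] at h1 h2
      have hm : 0 < m := by
        rcases Nat.eq_zero_or_pos m with h' | h'
        · subst h'; simp at h1
        · exact h'
      have d1 : t1 / m < m := hm' t1 h1
      have d2 : t2 / m < m := hm' t2 h2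
      have e1 : t1 % m < m := Nat.mod_lt _ hm
      have e2 : t2 % m < m := Nat.mod_lt _ hm
      unfold gridVal at h
      have r1 := Nat.div_add_mod t1 m
      have r2 := Nat.div_add_mod t2 m
      obtain ⟨hmodeq, hdiveq⟩ := grid_inj e1 d1 e2 d2 h
      rw [hdiveq, hmodeq] at r1
      omega
    apply List.perm_of_nodup_nodup_toFinset_eq hA hB
    apply Finset.eq_of_subset_of_card_le
    · intro x hx
      simp only [List.mem_toFinset, List.mem_map, List.mem_range] at hx ⊢
      obtain ⟨t, ht, rfl⟩ := hx
      have hm : 0 < m := by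
        rcases Nat.eq_zero_or_pos m with h' | h'
        · subst h'; simp at ht
        · exact h'
      have d1 : t / m < m := hm' t ht
      have e1 : t % m < m := Nat.mod_lt _ hm
      have H := Nat.mul_le_mul_right m (show t % m + 1 ≤ m by omega)
      rw [Nat.succ_mul] at H
      have key : ∀ x y : ℕ, x + m ≤ m * m → 1 ≤ y → y ≤ m → 1 ≤ x + y ∧ x + y ≤ m * m := by
        intro x y h1 h2 h3
        omega
      have hineq : 1 ≤ gridVal m t ∧ gridVal m t ≤ m * m := by
        unfold gridVal
        exact key _ _ H (by omega) (Nat.sub_le _ _)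
      exact ⟨gridVal m t - 1, by omega, by omega⟩
    · rw [List.toFinset_card_of_nodup hA, List.toFinset_card_of_nodup hB]
      simp
  · intro σ hσ
    have hlen : σ.length = m := by simpa using hσ.length_eq
    have hmem : ∀ x ∈ σ, 1 ≤ x ∧ x ≤ m := by
      intro x hx
      have := hσ.subset hx
      simp only [List.mem_map, List.mem_range] at this
      omega
    have hmem' : ∀ r : Fin σ.length, 1 ≤ σ.get r ∧ σ.get r ≤ m := fun r =>
      hmem _ (List.get_mem σ r)
    have hnd : σ.Nodup := hσ.nodup_iff.mpr <| by
      refine List.Nodup.map (fun a b h => by omega) List.nodup_range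
    have hvval : ∀ r : Fin σ.length, ∀ h,
        ((List.range (m*m)).map (gridVal m)).get ⟨(r : ℕ) * m + (σ.get r - 1), h⟩
          = (σ.get r - 1) * m + (m - (r : ℕ)) := by
      intro r h
      obtain ⟨h1, h2⟩ := hmem' r
      have hlt : σ.get r - 1 < m := by omega
      have hmod : ((r : ℕ) * m + (σ.get r - 1)) % m = σ.get r - 1 := by
        rw [Nat.mul_comm, Nat.mul_add_mod, Nat.mod_eq_of_lt hlt]
      have hdiv : ((r : ℕ) * m + (σ.get r - 1)) / m = (r : ℕ) := by
        rw [Nat.mul_comm, Nat.mul_add_div (by omega), Nat.div_eq_of_lt hlt]; omega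
      simp only [List.get_eq_getElem, List.getElem_map, List.getElem_range, gridVal]
      simp only [List.get_eq_getElem] at hmod hdiv
      rw [hmod, hdiv]
    refine ⟨fun p => ⟨(p : ℕ) * m + (σ.get p - 1), ?_⟩, ?_, ?_⟩
    · have hp : (p : ℕ) < m := by rw [← hlen]; exact p.isLt
      obtain ⟨h1, h2⟩ := hmem' p
      have H := Nat.mul_le_mul_right m (Nat.succ_le_of_lt hp)
      rw [Nat.succ_mul] at H
      simp only [List.length_map, List.length_range]
      omega
    · intro p q hpq
      obtain ⟨h1, h2⟩ := hmem' p
      show ((p : ℕ) * m + _ : ℕ) < (q : ℕ) * m + _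
      exact key_lt' hpq (by omega)
    · intro p q
      rw [hvval p, hvval q]
      obtain ⟨h1p, h2p⟩ := hmem' p
      obtain ⟨h1q, h2q⟩ := hmem' q
      have hp : (p : ℕ) < m := by rw [← hlen]; exact p.isLt
      have hq : (q : ℕ) < m := by rw [← hlen]; exact q.isLt
      constructor
      · intro h
        by_contra hc
        push_neg at hc
        rcases Nat.lt_or_ge (σ.get q) (σ.get p) with h' | h'
        · exact absurd (key_lt (by omega) (by omega) (by omega) :
            (σ.get q - 1) * m + (m - (q:ℕ)) < (σ.get p - 1) * m + (m - (p:ℕ))) (by omega)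
        · have he : σ.get p = σ.get q := by omega
          have : p = q := (List.Nodup.get_inj_iff hnd).mp he
          subst this
          omega
      · intro h
        exact key_lt (by omega) (by omega) (by omega)

lemma orderIsoContains_snoc {w γ : List ℕ} {c d : ℕ}
    (h : OrderIsoContains w γ) (hw : ∀ x ∈ w, x < c) (hγ : ∀ x ∈ γ, x < d) :
    OrderIsoContains (w ++ [c]) (γ ++ [d]) := by
  obtain ⟨f, hf, hiff⟩ := h
  have hgetw : ∀ (t : ℕ) (ht : t < w.length) (h' : t < (w ++ [c]).length),
      (w ++ [c]).get ⟨t, h'⟩ = w.get ⟨t, ht⟩ := by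
    intro t ht h'
    simp [List.get_eq_getElem, List.getElem_append, ht]
  have hgetc : ∀ (h' : w.length < (w ++ [c]).length),
      (w ++ [c]).get ⟨w.length, h'⟩ = c := by
    intro h'
    simp [List.get_eq_getElem, List.getElem_append]
  have hgetγ : ∀ (t : ℕ) (ht : t < γ.length) (h' : t < (γ ++ [d]).length),
      (γ ++ [d]).get ⟨t, h'⟩ = γ.get ⟨t, ht⟩ := by
    intro t ht h'
    simp [List.get_eq_getElem, List.getElem_append, ht]
  have hgetd : ∀ (h' : γ.length < (γ ++ [d]).length),
      (γ ++ [d]).get ⟨γ.length, h'⟩ = d := by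
    intro h'
    simp [List.get_eq_getElem, List.getElem_append]
  refine ⟨fun j => if hj : (j : ℕ) < γ.length then
      ⟨(f ⟨j, hj⟩ : ℕ), by have := (f ⟨j, hj⟩).isLt; simp⟩
    else ⟨w.length, by simp⟩, ?_, ?_⟩
  · intro p q hpq
    have hp := p.isLt
    have hq := q.isLt
    simp only [List.length_append, List.length_singleton] at hp hq
    have hpq' : (p : ℕ) < (q : ℕ) := hpq
    by_cases h1 : (p : ℕ) < γ.length <;> by_cases h2 : (q : ℕ) < γ.length
    · simp only [dif_pos h1, dif_pos h2, Fin.lt_def]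
      exact hf (show (⟨p, h1⟩ : Fin γ.length) < ⟨q, h2⟩ from hpq')
    · simp only [dif_pos h1, dif_neg h2, Fin.lt_def]
      exact (f ⟨p, h1⟩).isLt
    · omega
    · omega
  · intro p q
    have hp := p.isLt
    have hq := q.isLt
    simp only [List.length_append, List.length_singleton] at hp hq
    by_cases h1 : (p : ℕ) < γ.length <;> by_cases h2 : (q : ℕ) < γ.length
    · simp only [dif_pos h1, dif_pos h2]
      rw [hgetw _ (f ⟨p, h1⟩).isLt, hgetw _ (f ⟨q, h2⟩).isLt,
        hgetγ _ h1, hgetγ _ h2]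
      exact hiff ⟨p, h1⟩ ⟨q, h2⟩
    · have hq' : (q : ℕ) = γ.length := by omega
      simp only [dif_pos h1, dif_neg h2]
      rw [hgetw _ (f ⟨p, h1⟩).isLt, hgetc]
      have e1 : (γ ++ [d]).get q = d := by
        have : q = ⟨γ.length, by simp⟩ := by ext; simpa using hq'
        rw [this]; exact hgetd _
      have e2 : (γ ++ [d]).get p = γ.get ⟨p, h1⟩ := hgetγ _ h1 p.isLt
      rw [e1, e2]
      have hb1 : w.get (f ⟨(p : ℕ), h1⟩) < c := hw _ (List.get_mem w (f ⟨(p : ℕ), h1⟩))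
      have hb2 : γ.get ⟨(p : ℕ), h1⟩ < d := hγ _ (List.get_mem γ ⟨(p : ℕ), h1⟩)
      constructor
      · intro _; exact hb2
      · intro _; exact hb1
    · have hp' : (p : ℕ) = γ.length := by omega
      simp only [dif_neg h1, dif_pos h2]
      rw [hgetw _ (f ⟨q, h2⟩).isLt, hgetc]
      have e1 : (γ ++ [d]).get p = d := by
        have : p = ⟨γ.length, by simp⟩ := by ext; simpa using hp'
        rw [this]; exact hgetd _
      have e2 : (γ ++ [d]).get q = γ.get ⟨q, h2⟩ := hgetγ _ h2 q.isLt
      rw [e1, e2]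
      simp only [Fin.eta]
      have hb1 : w.get (f ⟨(q : ℕ), h2⟩) < c := hw _ (List.get_mem w (f ⟨(q : ℕ), h2⟩))
      have hb2 : γ.get ⟨(q : ℕ), h2⟩ < d := hγ _ (List.get_mem γ ⟨(q : ℕ), h2⟩)
      constructor
      · intro hcon; omega
      · intro hcon; omega
    · have : p = q := Fin.ext (by omega)
      subst this
      constructor <;> intro h <;> exact absurd h (lt_irrefl _)

lemma step {m n : ℕ} {w : List ℕ} (hw : IsPermList n w) (hsup : IsSuperpattern m w) :
    IsPermList (n + 1) (w ++ [n + 1]) ∧ IsCircSuperpattern (m + 1) (w ++ [n + 1]) := by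
  have hwlen : w.length = n := by simpa using hw.length_eq
  have hwval : ∀ x ∈ w, x < n + 1 := by
    intro x hx
    have := hw.subset hx
    simp only [List.mem_map, List.mem_range] at this
    omega
  constructor
  · unfold IsPermList
    have he : (List.range (n + 1)).map (· + 1)
        = (List.range n).map (· + 1) ++ [n + 1] := by
      rw [List.range_succ, List.map_append]
      rfl
    rw [he]
    exact hw.append_right _
  · intro σ hσ
    have hσlen : σ.length = m + 1 := by simpa using hσ.length_eq
    have hkmem : (m + 1) ∈ σ := hσ.mem_iff.mpr (by
      simp only [List.mem_map, List.mem_range]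
      exact ⟨m, by omega, by omega⟩)
    set i := σ.idxOf (m + 1) with hi_def
    have hi : i < m + 1 := by
      rw [← hσlen]
      exact List.idxOf_lt_length_iff.mpr hkmem
    have hi' : i < σ.length := by omega
    have hgetk : σ[i] = m + 1 := List.getElem_idxOf hi'
    refine ⟨(i + 1) % (m + 1), Nat.mod_lt _ (by omega), ?_⟩
    have hrot : σ.rotate ((i + 1) % (m + 1)) = σ.rotate (i + 1) := by
      conv_lhs => rw [← hσlen]
      exact List.rotate_mod σ (i + 1)
    rw [hrot]
    have htake : σ.take (i + 1) = σ.take i ++ [m + 1] := by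
      rw [List.take_succ]
      congr 1
      rw [List.getElem?_eq_getElem hi', hgetk]
      rfl
    have hrot2 : σ.rotate (i + 1) = (σ.drop (i + 1) ++ σ.take i) ++ [m + 1] := by
      rw [List.rotate_eq_drop_append_take (by omega : i + 1 ≤ σ.length), htake,
        ← List.append_assoc]
    set γ := σ.drop (i + 1) ++ σ.take i with hγ_def
    have hγperm : IsPermList m γ := by
      have h1 : (γ ++ [m + 1]).Perm ((List.range (m + 1)).map (· + 1)) := by
        rw [← hrot2]
        exact (σ.rotate_perm (i + 1)).trans hσ
      have h2 : (List.range (m + 1)).map (· + 1)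
          = (List.range m).map (· + 1) ++ [m + 1] := by
        rw [List.range_succ, List.map_append]
        rfl
      rw [h2] at h1
      exact (List.perm_append_right_iff [m + 1]).mp h1
    have hγval : ∀ x ∈ γ, x < m + 1 := by
      intro x hx
      have := hγperm.subset hx
      simp only [List.mem_map, List.mem_range] at this
      omega
    have hcont := orderIsoContains_snoc (hsup γ hγperm) hwval hγval
    rw [hrot2]
    exact hcont

/-- `L_circ(k) ≤ L(k−1) + 1` for every `k ≥ 2`. -/
theorem Lcirc_le_Llin_pred_add_one (k : ℕ) (hk : 2 ≤ k) :
    Lcirc k ≤ Llin (k - 1) + 1 := by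
  obtain ⟨m, rfl⟩ : ∃ m, k = m + 1 := ⟨k - 1, by omega⟩
  have hm1 : m + 1 - 1 = m := by omega
  rw [hm1]
  have hne : {n | ∃ w : List ℕ, IsPermList n w ∧ IsSuperpattern m w}.Nonempty := by
    obtain ⟨n, w, h1, h2⟩ := exists_superpattern m
    exact ⟨n, w, h1, h2⟩
  obtain ⟨w, hw, hsup⟩ := Nat.sInf_mem hne
  obtain ⟨h1, h2⟩ := step hw hsup
  exact Nat.sInf_le ⟨w ++ [Llin m + 1], h1, h2⟩
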